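/- Let T ~ St(t|0, I, ν) be standard n-dimensional Student's t and k = (k₁,…,kₙ) ∈ ℕⁿ with Σkᵢ < ν and all kᵢ even. Then E[∏ Tᵢ^{kᵢ}] = ν^{(Σkᵢ)/2} · Γ((ν-Σkᵢ)/2)/Γ(ν/2) · ∏ kᵢ! / (2^{Σkᵢ} ∏(kᵢ/2)!). -/

import Mathlib

open Real MeasureTheory Finset Set

lemma gauss_moment {K : ℕ} (hK : Even K) {b : ℝ} (hb : 0 < b) :
    ∫ x : ℝ, x ^ K * Real.exp (-b * x ^ 2)
      = b ^ (-((K : ℝ) + 1) / 2) * Real.Gamma (((K : ℝ) + 1) / 2) := by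
  have heq : (fun x : ℝ => x ^ K * Real.exp (-b * x ^ 2))
      = fun x : ℝ => |x| ^ K * Real.exp (-b * |x| ^ 2) := by
    funext x
    rw [hK.pow_abs, sq_abs]
  rw [heq, integral_comp_abs (f := fun x => x ^ K * Real.exp (-b * x ^ 2))]
  have : ∀ x ∈ Ioi (0:ℝ), x ^ K * Real.exp (-b * x ^ 2)
      = x ^ (K : ℝ) * Real.exp (-b * x ^ (2:ℝ)) := by
    intro x hx
    rw [Real.rpow_natCast, Real.rpow_two]
  rw [setIntegral_congr_fun measurableSet_Ioi this,
    integral_rpow_mul_exp_neg_mul_rpow two_pos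
      (lt_of_lt_of_le neg_one_lt_zero (Nat.cast_nonneg K)) hb]
  ring

lemma gauss_integrable (K : ℕ) {b : ℝ} (hb : 0 < b) :
    Integrable (fun x : ℝ => x ^ K * Real.exp (-b * x ^ 2)) := by
  have h := integrable_rpow_mul_exp_neg_mul_sq hb (s := K)
    (lt_of_lt_of_le neg_one_lt_zero (Nat.cast_nonneg K))
  simpa [Real.rpow_natCast] using h

lemma key (n : ℕ) (ν : ℝ) (hν : 0 < ν) (k : Fin n → ℕ)
    (hsum : ((∑ i, k i : ℕ) : ℝ) < ν) (heven : ∀ i, Even (k i)) :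
    ∫ t : Fin n → ℝ, (∏ i, t i ^ k i) * (1 + (∑ i, t i ^ 2) / ν) ^ (-((ν + n)/2))
      = ν ^ ((ν + n)/2) / Real.Gamma ((ν + n)/2) *
        ((∏ i, Real.Gamma (((k i : ℝ) + 1)/2)) *
          ((1/ν) ^ ((ν - (∑ i, k i : ℕ))/2) * Real.Gamma ((ν - (∑ i, k i : ℕ))/2))) := by
  set K : ℕ := ∑ i, k i with hK
  set a : ℝ := (ν + n)/2 with ha_def
  have ha : 0 < a := by positivity
  set g : (Fin n → ℝ) → ℝ → ℝ := fun t x =>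
    (∏ i, t i ^ k i) * (x ^ (a - 1) * Real.exp (-((ν + ∑ i, t i ^ 2) * x))) with hg
  -- step 1 : pointwise representation
  have step1 : ∀ t : Fin n → ℝ,
      (∏ i, t i ^ k i) * (1 + (∑ i, t i ^ 2) / ν) ^ (-a)
        = ν ^ a / Real.Gamma a * ∫ x in Ioi (0:ℝ), g t x := by
    intro t
    have hS : 0 ≤ ∑ i, t i ^ 2 := by positivity
    have hνS : 0 < ν + ∑ i, t i ^ 2 := by positivity
    have : ∫ x in Ioi (0:ℝ), g t x
        = (∏ i, t i ^ k i) * ((1 / (ν + ∑ i, t i ^ 2)) ^ a * Real.Gamma a) := by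
      rw [hg]
      simp only []
      rw [integral_const_mul,
        integral_rpow_mul_exp_neg_mul_Ioi ha hνS]
    rw [this]
    have hΓ : Real.Gamma a ≠ 0 := (Real.Gamma_pos_of_pos ha).ne'
    have hkey : (1 + (∑ i, t i ^ 2) / ν) ^ (-a)
        = ν ^ a * (1 / (ν + ∑ i, t i ^ 2)) ^ a := by
      have h1 : (1 : ℝ) + (∑ i, t i ^ 2) / ν = (ν + ∑ i, t i ^ 2) / ν := by
        field_simp
      rw [h1, Real.rpow_neg (by positivity), Real.div_rpow hνS.le hν.le, one_div,
        Real.inv_rpow hνS.le, inv_div, div_eq_mul_inv]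
    rw [hkey]
    field_simp
  have hc : (0:ℝ) < (ν - K)/2 := by
    have : (K:ℝ) < ν := hsum
    linarith
  have hKn : ∑ i, (-(((k i : ℝ)) + 1)/2) = -(((K:ℝ) + n))/2 := by
    rw [← Finset.sum_div]
    congr 1
    push_cast [hK]
    simp [Finset.sum_add_distrib]
  -- factorization of slices
  have hfact : ∀ x : ℝ, 0 < x → (fun t : Fin n → ℝ => g t x)
      = fun t => (x ^ (a - 1) * Real.exp (-(ν * x))) *
          ∏ i, (t i ^ k i * Real.exp (-x * t i ^ 2)) := by
    intro x hx
    funext t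
    simp only [hg]
    have hsum2 : ∑ i, -x * t i ^ 2 = -(x * ∑ i, t i ^ 2) := by
      simp [Finset.mul_sum]
    have hexp : Real.exp (-((ν + ∑ i, t i ^ 2) * x))
        = Real.exp (-(ν * x)) * ∏ i, Real.exp (-x * t i ^ 2) := by
      rw [← Real.exp_sum, ← Real.exp_add]
      congr 1
      rw [hsum2]
      ring
    rw [hexp, Finset.prod_mul_distrib]
    ring
  -- slice integrability
  have hslice : ∀ x : ℝ, 0 < x → Integrable (fun t : Fin n → ℝ => g t x) := by
    intro x hx
    rw [hfact x hx]
    exact (Integrable.fintype_prod (f := fun i y => y ^ k i * Real.exp (-x * y ^ 2))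
      (fun i => gauss_integrable (k i) hx)).const_mul _
  -- value of inner integral
  have hinner : ∀ x ∈ Ioi (0:ℝ), ∫ t : Fin n → ℝ, g t x
      = (∏ i, Real.Gamma (((k i : ℝ) + 1)/2)) *
          (x ^ ((ν - K)/2 - 1) * Real.exp (-(ν * x))) := by
    intro x hx
    rw [hfact x hx, integral_const_mul,
      integral_fintype_prod_volume_eq_prod (f := fun i y => y ^ k i * Real.exp (-x * y ^ 2))]
    rw [Finset.prod_congr rfl (fun i _ => gauss_moment (heven i) hx),
      Finset.prod_mul_distrib, ← Real.rpow_sum_of_pos hx, hKn]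
    have hxx : x ^ (a - 1) * x ^ (-((K:ℝ) + n)/2) = x ^ ((ν - K)/2 - 1) := by
      rw [← Real.rpow_add hx, ha_def]
      ring_nf
    rw [← hxx]
    ring
  -- nonnegativity
  have hnn : ∀ (t : Fin n → ℝ) (x : ℝ), 0 < x → 0 ≤ g t x := by
    intro t x hx
    apply mul_nonneg
    · exact Finset.prod_nonneg fun i _ => (heven i).pow_nonneg _
    · positivity
  -- measurability on the product
  have hgmeas : AEStronglyMeasurable (fun p : (Fin n → ℝ) × ℝ => g p.1 p.2)
      (volume.prod (volume.restrict (Ioi 0))) := by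
    apply Measurable.aestronglyMeasurable
    simp only [hg]
    fun_prop
  -- base integrability on Ioi 0
  have hbase : IntegrableOn (fun x : ℝ => x ^ ((ν - K)/2 - 1) * Real.exp (-(ν * x))) (Ioi 0) := by
    have h := integrableOn_rpow_mul_exp_neg_mul_rpow
      (s := (ν - K)/2 - 1) (p := 1) (by linarith) zero_lt_one hν
    refine h.congr_fun (fun x hx => ?_) measurableSet_Ioi
    simp only [Real.rpow_one, neg_mul]
  -- joint integrability
  have hgint : Integrable (fun p : (Fin n → ℝ) × ℝ => g p.1 p.2)
      (volume.prod (volume.restrict (Ioi 0))) := by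
    rw [integrable_prod_iff' hgmeas]
    constructor
    · refine (ae_restrict_iff' measurableSet_Ioi).mpr (ae_of_all _ fun x hx => hslice x hx)
    · refine Integrable.congr (hbase.const_mul (∏ i, Real.Gamma (((k i : ℝ) + 1)/2))) ?_
      filter_upwards [ae_restrict_mem measurableSet_Ioi] with x hx
      rw [show (fun t : Fin n → ℝ => ‖g t x‖) = fun t => g t x from
        funext fun t => Real.norm_of_nonneg (hnn t x hx), hinner x hx]
  -- assembly
  calc ∫ t : Fin n → ℝ, (∏ i, t i ^ k i) * (1 + (∑ i, t i ^ 2) / ν) ^ (-a)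
      = ∫ t : Fin n → ℝ, ν ^ a / Real.Gamma a * ∫ x in Ioi (0:ℝ), g t x := by
        exact integral_congr_ae (ae_of_all _ step1)
    _ = ν ^ a / Real.Gamma a * ∫ t : Fin n → ℝ, ∫ x in Ioi (0:ℝ), g t x := by
        rw [integral_const_mul]
    _ = ν ^ a / Real.Gamma a * ∫ x in Ioi (0:ℝ), ∫ t : Fin n → ℝ, g t x := by
        rw [integral_integral_swap hgint]
    _ = ν ^ a / Real.Gamma a * ∫ x in Ioi (0:ℝ),
          (∏ i, Real.Gamma (((k i : ℝ) + 1)/2)) *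
            (x ^ ((ν - K)/2 - 1) * Real.exp (-(ν * x))) := by
        rw [setIntegral_congr_fun measurableSet_Ioi hinner]
    _ = ν ^ a / Real.Gamma a * ((∏ i, Real.Gamma (((k i : ℝ) + 1)/2)) *
          ((1/ν) ^ ((ν - (K:ℝ))/2) * Real.Gamma ((ν - K)/2))) := by
        rw [integral_const_mul, integral_rpow_mul_exp_neg_mul_Ioi hc hν]

lemma gamma_half (m : ℕ) :
    Real.Gamma ((2 * m + 1) / 2) = Real.sqrt π * (2 * m).factorial / (4 ^ m * m.factorial) := by
  induction m with
  | zero => simpa using Real.Gamma_one_half_eq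
  | succ m ih =>
    have h1 : (2 * ((m : ℝ) + 1) + 1) / 2 = (2 * m + 1) / 2 + 1 := by ring
    have h2 : ((2 * m + 1 : ℝ)) / 2 ≠ 0 := by positivity
    push_cast
    rw [h1, Real.Gamma_add_one h2, ih]
    have h3 : (2 * (m + 1)).factorial = (2 * m + 2) * ((2 * m + 1) * (2 * m).factorial) := by
      have : 2 * (m + 1) = (2 * m + 1) + 1 := by ring
      rw [this, Nat.factorial_succ, Nat.factorial_succ]
    rw [h3, Nat.factorial_succ]
    have h4 : ((m.factorial : ℝ)) ≠ 0 := Nat.cast_ne_zero.mpr m.factorial_ne_zero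
    push_cast
    field_simp
    ring

theorem multivariate_student_t_even_moments (n : ℕ) (ν : ℝ) (hν : 0 < ν)
    (k : Fin n → ℕ) (hsum : ((∑ i, k i : ℕ) : ℝ) < ν) (heven : ∀ i, Even (k i)) :
    ∫ t : Fin n → ℝ, (∏ i, t i ^ k i) *
        (Real.Gamma ((ν + n)/2) / Real.Gamma (ν/2) * (ν * π) ^ (-(n:ℝ)/2) *
          (1 + (∑ i, t i ^ 2) / ν) ^ (-((ν + n)/2)))
      = ν ^ (((∑ i, k i : ℕ) : ℝ)/2) * (Real.Gamma ((ν - (∑ i, k i : ℕ))/2) / Real.Gamma (ν/2)) *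
          ((∏ i, ((k i).factorial : ℝ)) / (2 ^ (∑ i, k i) * ∏ i, ((k i / 2).factorial : ℝ))) := by
  have hΓa : Real.Gamma ((ν + n)/2) ≠ 0 := (Real.Gamma_pos_of_pos (by positivity)).ne'
  -- product of half-integer Gammas
  have hP : ∏ i, Real.Gamma (((k i : ℝ) + 1)/2)
      = (Real.sqrt π) ^ n *
        ((∏ i, ((k i).factorial : ℝ)) / (2 ^ (∑ i, k i) * ∏ i, ((k i / 2).factorial : ℝ))) := by
    have hper : ∀ i, Real.Gamma (((k i : ℝ) + 1)/2)
        = Real.sqrt π * (((k i).factorial : ℝ) / (2 ^ (k i) * ((k i / 2).factorial : ℝ))) := by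
      intro i
      have h2m : 2 * (k i / 2) = k i := Nat.two_mul_div_two_of_even (heven i)
      have hcast : ((k i : ℝ) + 1)/2 = (2 * ((k i / 2 : ℕ) : ℝ) + 1) / 2 := by
        rw [show (2 : ℝ) * ((k i / 2 : ℕ) : ℝ) = ((2 * (k i / 2) : ℕ) : ℝ) by push_cast; ring, h2m]
      rw [hcast, gamma_half, h2m]
      have h4 : (4 : ℝ) ^ (k i / 2) = 2 ^ (k i) := by
        rw [show (4:ℝ) = 2^2 by norm_num, ← pow_mul, h2m]
      rw [h4]
      ring
    rw [Finset.prod_congr rfl (fun i _ => hper i), Finset.prod_mul_distrib,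
      Finset.prod_const, Finset.card_univ, Fintype.card_fin, Finset.prod_div_distrib,
      Finset.prod_mul_distrib, Finset.prod_pow_eq_pow_sum]
  -- main scalar combination
  have hsqrt : (Real.sqrt π) ^ n = π ^ ((n:ℝ)/2) := by
    rw [Real.sqrt_eq_rpow, ← Real.rpow_natCast (π ^ ((1:ℝ)/2)) n, ← Real.rpow_mul Real.pi_pos.le]
    congr 1
    ring
  have hmain : (ν * π) ^ (-(n:ℝ)/2) * (ν ^ ((ν + n)/2) *
        ((1/ν) ^ ((ν - (∑ i, k i : ℕ))/2) * (Real.sqrt π) ^ n)) = ν ^ (((∑ i, k i : ℕ) : ℝ)/2) := by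
    rw [Real.mul_rpow hν.le Real.pi_pos.le, hsqrt, one_div, Real.inv_rpow hν.le,
      ← Real.rpow_neg hν.le]
    set K' : ℝ := ((∑ i, k i : ℕ) : ℝ) with hK'
    calc ν ^ (-(n:ℝ)/2) * π ^ (-(n:ℝ)/2) *
          (ν ^ ((ν + n)/2) * (ν ^ (-((ν - K')/2)) * π ^ ((n:ℝ)/2)))
        = ν ^ (-(n:ℝ)/2 + ((ν + n)/2 + -((ν - K')/2))) * π ^ (-(n:ℝ)/2 + (n:ℝ)/2) := by
          rw [Real.rpow_add hν, Real.rpow_add hν, Real.rpow_add Real.pi_pos]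
          ring
      _ = ν ^ (K'/2) := by
          rw [show -(n:ℝ)/2 + ((ν + n)/2 + -((ν - K')/2)) = K'/2 by ring,
            show -(n:ℝ)/2 + (n:ℝ)/2 = 0 by ring, Real.rpow_zero, mul_one]
  -- assemble
  calc ∫ t : Fin n → ℝ, (∏ i, t i ^ k i) *
        (Real.Gamma ((ν + n)/2) / Real.Gamma (ν/2) * (ν * π) ^ (-(n:ℝ)/2) *
          (1 + (∑ i, t i ^ 2) / ν) ^ (-((ν + n)/2)))
      = ∫ t : Fin n → ℝ, (Real.Gamma ((ν + n)/2) / Real.Gamma (ν/2) * (ν * π) ^ (-(n:ℝ)/2)) *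
          ((∏ i, t i ^ k i) * (1 + (∑ i, t i ^ 2) / ν) ^ (-((ν + n)/2))) := by
        exact integral_congr_ae (ae_of_all _ fun t => by ring)
    _ = (Real.Gamma ((ν + n)/2) / Real.Gamma (ν/2) * (ν * π) ^ (-(n:ℝ)/2)) *
          ∫ t : Fin n → ℝ, (∏ i, t i ^ k i) * (1 + (∑ i, t i ^ 2) / ν) ^ (-((ν + n)/2)) := by
        rw [integral_const_mul]
    _ = (Real.Gamma ((ν + n)/2) / Real.Gamma (ν/2) * (ν * π) ^ (-(n:ℝ)/2)) *
        (ν ^ ((ν + n)/2) / Real.Gamma ((ν + n)/2) *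
          ((∏ i, Real.Gamma (((k i : ℝ) + 1)/2)) *
            ((1/ν) ^ ((ν - (∑ i, k i : ℕ))/2) * Real.Gamma ((ν - (∑ i, k i : ℕ))/2)))) := by
        rw [key n ν hν k hsum heven]
    _ = ν ^ (((∑ i, k i : ℕ) : ℝ)/2) * (Real.Gamma ((ν - (∑ i, k i : ℕ))/2) / Real.Gamma (ν/2)) *
          ((∏ i, ((k i).factorial : ℝ)) / (2 ^ (∑ i, k i) * ∏ i, ((k i / 2).factorial : ℝ))) := by
        rw [hP, ← hmain]
        field_simp
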